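/- There exists an absolute constant C > 0 such that for every function u : [0,1] → ℝ of bounded pointwise variation V(u) := sup Σ_j |u(ξ_{j+1}) − u(ξ_j)| (supremum over all partitions 0 ≤ ξ₀ < ... < ξ_n ≤ 1) and every positive integer N, the Bernstein polynomial B_N(u)(x) := Σ_{k=0}^{N} u(k/N) · binom(N,k) · x^k (1−x)^{N−k} satisfies ∫_0^1 |B_N(u)(x) − u(x)| dx ≤ C · V(u) · N^{−1/2}. -/

import Mathlib

open MeasureTheory intervalIntegral

/-- The `N`-th Bernstein polynomial of `u` on `[0,1]`:
`B_N(u)(x) = Σ_{k=0}^{N} u(k/N)·binom(N,k)·x^k(1−x)^{N−k}`. -/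
noncomputable def bernstein' (N : ℕ) (u : ℝ → ℝ) (x : ℝ) : ℝ :=
  ∑ k ∈ Finset.range (N + 1),
    u ((k : ℝ) / (N : ℝ)) * (N.choose k : ℝ) * x ^ k * (1 - x) ^ (N - k)

section BernsteinBVProof
open MeasureTheory Set Finset ENNReal

namespace BernsteinBV

noncomputable def clamp (x : ℝ) : ℝ := max 0 (min x 1)

lemma clamp_mem (x : ℝ) : clamp x ∈ Icc (0:ℝ) 1 := by
  constructor
  · exact le_max_left _ _
  · exact max_le (by norm_num) (min_le_right _ _)

lemma clamp_of_mem {x : ℝ} (hx : x ∈ Icc (0:ℝ) 1) : clamp x = x := by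
  simp [clamp, min_eq_left hx.2, max_eq_right hx.1]

lemma clamp_mono : Monotone clamp := fun a b h =>
  max_le_max le_rfl (min_le_min h le_rfl)

variable {u : ℝ → ℝ}

noncomputable def vf (u : ℝ → ℝ) (x : ℝ) : ℝ :=
  (eVariationOn u (Set.Icc 0 (clamp x))).toReal

lemma evar_sub_ne_top (hu : eVariationOn u (Set.Icc (0 : ℝ) 1) ≠ ⊤) {a b : ℝ} (ha : 0 ≤ a) (hb : b ≤ 1) :
    eVariationOn u (Set.Icc a b) ≠ ⊤ :=
  fun h => hu (top_le_iff.mp (h ▸ eVariationOn.mono u (Icc_subset_Icc ha hb)))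

lemma vf_nonneg (u : ℝ → ℝ) (x : ℝ) : 0 ≤ vf u x := ENNReal.toReal_nonneg

lemma vf_mono (hu : eVariationOn u (Set.Icc (0 : ℝ) 1) ≠ ⊤) : Monotone (vf u) := by
  intro a b hab
  have h1 := eVariationOn.mono u (Icc_subset_Icc (le_refl (0:ℝ)) (clamp_mono hab))
  exact ENNReal.toReal_mono (evar_sub_ne_top hu le_rfl (clamp_mem b).2) h1

lemma vf_le (hu : eVariationOn u (Set.Icc (0 : ℝ) 1) ≠ ⊤) (x : ℝ) : vf u x ≤ (eVariationOn u (Set.Icc (0:ℝ) 1)).toReal :=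
  ENNReal.toReal_mono hu (eVariationOn.mono u (Icc_subset_Icc le_rfl (clamp_mem x).2))

/-- key variation inequality -/
lemma abs_u_le_vf (hu : eVariationOn u (Set.Icc (0 : ℝ) 1) ≠ ⊤) {a b : ℝ} (ha : a ∈ Icc (0:ℝ) 1) (hb : b ∈ Icc (0:ℝ) 1) (hab : a ≤ b) :
    |u b - u a| ≤ vf u b - vf u a := by
  have hadd := eVariationOn.Icc_add_Icc u (s := univ) ha.1 hab (mem_univ a)
  simp only [univ_inter] at hadd
  have h0a : eVariationOn u (Icc 0 a) ≠ ⊤ := evar_sub_ne_top hu le_rfl ha.2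
  have hab' : eVariationOn u (Icc a b) ≠ ⊤ := evar_sub_ne_top hu ha.1 hb.2
  have h0b : eVariationOn u (Icc 0 b) ≠ ⊤ := evar_sub_ne_top hu le_rfl hb.2
  have hvf : vf u b - vf u a = (eVariationOn u (Icc a b)).toReal := by
    have : vf u b = vf u a + (eVariationOn u (Icc a b)).toReal := by
      rw [vf, vf, clamp_of_mem ha, clamp_of_mem hb, ← hadd,
        ENNReal.toReal_add h0a hab']
    linarith
  rw [hvf]
  have hedist := eVariationOn.edist_le u (x := b) (y := a)
    (Set.mem_Icc.2 ⟨hab, le_rfl⟩) (Set.mem_Icc.2 ⟨le_rfl, hab⟩)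
  have := ENNReal.toReal_mono hab' hedist
  rwa [edist_dist, ENNReal.toReal_ofReal dist_nonneg, Real.dist_eq] at this

/-- generalized inverse of vf -/
noncomputable def gi (u : ℝ → ℝ) (s : ℝ) : ℝ :=
  sSup (insert (0:ℝ) {z : ℝ | z ∈ Icc (0:ℝ) 1 ∧ vf u z ≤ s})

lemma gi_bddAbove (s : ℝ) :
    BddAbove (insert (0:ℝ) {z : ℝ | z ∈ Icc (0:ℝ) 1 ∧ vf u z ≤ s}) := by
  refine ⟨1, fun z hz => ?_⟩
  rcases hz with h | h
  · simp [h]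
  · exact h.1.2

lemma gi_mono : Monotone (gi u) := by
  intro s s' hss
  apply csSup_le_csSup (gi_bddAbove s') (Set.insert_nonempty _ _)
  intro z hz
  rcases hz with h | h
  · exact h ▸ mem_insert _ _
  · exact mem_insert_of_mem _ ⟨h.1, h.2.trans hss⟩

lemma gi_mem (s : ℝ) : gi u s ∈ Icc (0:ℝ) 1 := by
  constructor
  · exact le_csSup (gi_bddAbove s) (mem_insert _ _)
  · apply csSup_le (Set.insert_nonempty _ _)
    intro z hz
    rcases hz with h | h
    · simp [h]
    · exact h.1.2

lemma le_gi {x s : ℝ} (hx : x ∈ Icc (0:ℝ) 1) (h : vf u x ≤ s) : x ≤ gi u s :=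
  le_csSup (gi_bddAbove s) (mem_insert_of_mem _ ⟨hx, h⟩)

lemma gi_le (hu : eVariationOn u (Set.Icc (0 : ℝ) 1) ≠ ⊤) {y s : ℝ} (hy : y ∈ Icc (0:ℝ) 1) (h : s < vf u y) : gi u s ≤ y := by
  apply csSup_le (Set.insert_nonempty _ _)
  intro z hz
  rcases hz with hz | hz
  · exact hz ▸ hy.1
  · by_contra hc
    push_neg at hc
    exact absurd ((vf_mono hu hc.le).trans hz.2) (not_le.2 h)

/-- the layer-cake comparison -/
lemma key2 (hu : eVariationOn u (Set.Icc (0 : ℝ) 1) ≠ ⊤) {x y : ℝ} (hx : x ∈ Icc (0:ℝ) 1) (hy : y ∈ Icc (0:ℝ) 1) :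
    ENNReal.ofReal |u y - u x| ≤
      volume {s : ℝ | (0 ≤ s ∧ s < (eVariationOn u (Set.Icc (0 : ℝ) 1)).toReal) ∧
        gi u s ∈ Icc (min x y) (max x y)} := by
  rcases le_total x y with hxy | hxy
  · rw [min_eq_left hxy, max_eq_right hxy]
    calc ENNReal.ofReal |u y - u x| ≤ ENNReal.ofReal (vf u y - vf u x) :=
          ENNReal.ofReal_le_ofReal (abs_u_le_vf hu hx hy hxy)
      _ = volume (Ico (vf u x) (vf u y)) := (Real.volume_Ico).symm
      _ ≤ _ := by
          apply measure_mono
          intro s hs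
          rcases hs with ⟨h1, h2⟩
          refine ⟨⟨(vf_nonneg u x).trans h1, lt_of_lt_of_le h2 (vf_le hu y)⟩,
            le_gi hx h1, gi_le hu hy h2⟩
  · rw [min_eq_right hxy, max_eq_left hxy]
    calc ENNReal.ofReal |u y - u x| = ENNReal.ofReal |u x - u y| := by rw [abs_sub_comm]
      _ ≤ ENNReal.ofReal (vf u x - vf u y) :=
          ENNReal.ofReal_le_ofReal (abs_u_le_vf hu hy hx hxy)
      _ = volume (Ico (vf u y) (vf u x)) := (Real.volume_Ico).symm
      _ ≤ _ := by
          apply measure_mono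
          intro s hs
          rcases hs with ⟨h1, h2⟩
          refine ⟨⟨(vf_nonneg u y).trans h1, lt_of_lt_of_le h2 (vf_le hu x)⟩,
            le_gi hy h1, gi_le hu hx h2⟩


noncomputable def pb (N k : ℕ) (x : ℝ) : ℝ := (N.choose k : ℝ) * x ^ k * (1 - x) ^ (N - k)

lemma pb_eval (N k : ℕ) (x : ℝ) : (bernsteinPolynomial ℝ N k).eval x = pb N k x := by
  simp [bernsteinPolynomial, pb]

lemma pb_nonneg {N k : ℕ} {x : ℝ} (hx : x ∈ Icc (0:ℝ) 1) : 0 ≤ pb N k x := by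
  have h1 : (0:ℝ) ≤ x ^ k := pow_nonneg hx.1 _
  have h2 : (0:ℝ) ≤ (1 - x) ^ (N - k) := pow_nonneg (by linarith [hx.2]) _
  have h0 : (0:ℝ) ≤ (N.choose k : ℝ) := Nat.cast_nonneg _
  exact mul_nonneg (mul_nonneg h0 h1) h2

lemma pb_sum (N : ℕ) (x : ℝ) : ∑ k ∈ range (N + 1), pb N k x = 1 := by
  have := bernsteinPolynomial.sum ℝ N
  have h := congrArg (Polynomial.eval x) this
  simpa [Polynomial.eval_finset_sum, pb_eval] using h

lemma pb_var {N : ℕ} (hN : 0 < N) (x : ℝ) :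
    ∑ k ∈ range (N + 1), (x - (k : ℝ) / N) ^ 2 * pb N k x = x * (1 - x) / N := by
  have hv := bernsteinPolynomial.variance ℝ N
  simp only [nsmul_eq_mul] at hv
  have h := congrArg (Polynomial.eval x) hv
  simp only [Polynomial.eval_finset_sum, Polynomial.eval_mul, Polynomial.eval_pow,
    Polynomial.eval_sub, Polynomial.eval_X, Polynomial.eval_natCast,
    Polynomial.eval_one, pb_eval] at h
  have hN' : (N : ℝ) ≠ 0 := Nat.cast_ne_zero.2 hN.ne'
  have key : ∀ k ∈ range (N + 1),
      (x - (k : ℝ) / N) ^ 2 * pb N k x = ((N:ℝ) * x - k) ^ 2 * pb N k x / ((N:ℝ)^2) := by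
    intro k _
    rw [show x - (k:ℝ)/N = ((N:ℝ)*x - k)/N by field_simp, div_pow, div_mul_eq_mul_div]
  rw [Finset.sum_congr rfl key, ← Finset.sum_div, h]
  field_simp

lemma step1 {N : ℕ} (u : ℝ → ℝ) {x : ℝ} (hx : x ∈ Icc (0:ℝ) 1) :
    |(∑ k ∈ Finset.range (N + 1),
        u ((k : ℝ) / (N : ℝ)) * (N.choose k : ℝ) * x ^ k * (1 - x) ^ (N - k)) - u x|
      ≤ ∑ k ∈ range (N + 1), pb N k x * |u ((k : ℝ) / N) - u x| := by
  have h1 : (∑ k ∈ Finset.range (N + 1),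
      u ((k : ℝ) / (N : ℝ)) * (N.choose k : ℝ) * x ^ k * (1 - x) ^ (N - k)) - u x
      = ∑ k ∈ range (N + 1), pb N k x * (u ((k : ℝ) / N) - u x) := by
    have e1 : (∑ k ∈ Finset.range (N + 1),
        u ((k : ℝ) / (N : ℝ)) * (N.choose k : ℝ) * x ^ k * (1 - x) ^ (N - k))
        = ∑ k ∈ range (N + 1), pb N k x * u ((k : ℝ) / N) :=
      Finset.sum_congr rfl fun k _ => by rw [pb]; ring
    have e2 : u x = ∑ k ∈ range (N + 1), pb N k x * u x := by
      rw [← Finset.sum_mul, pb_sum, one_mul]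
    rw [e1]
    conv_lhs => rw [e2]
    rw [← Finset.sum_sub_distrib]
    exact Finset.sum_congr rfl fun k _ => by ring
  rw [h1]
  refine (Finset.abs_sum_le_sum_abs _ _).trans (le_of_eq ?_)
  exact Finset.sum_congr rfl fun k _ => by
    rw [abs_mul, abs_of_nonneg (pb_nonneg hx)]


/-- Claim A : the kernel bound. -/
lemma claimA {N : ℕ} (hN : 0 < N) {x : ℝ} (hx : x ∈ Icc (0:ℝ) 1) (t : ℝ) :
    ∑ k ∈ range (N + 1), ENNReal.ofReal (pb N k x) *
        (if t ∈ Icc (min x ((k:ℝ)/N)) (max x ((k:ℝ)/N)) then 1 else 0)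
      ≤ min 1 (ENNReal.ofReal (1 / (4 * N)) / ENNReal.ofReal ((x - t) ^ 2)) := by
  refine le_min ?_ ?_
  · calc ∑ k ∈ range (N + 1), ENNReal.ofReal (pb N k x) *
          (if t ∈ Icc (min x ((k:ℝ)/N)) (max x ((k:ℝ)/N)) then 1 else 0)
        ≤ ∑ k ∈ range (N + 1), ENNReal.ofReal (pb N k x) := by
          refine Finset.sum_le_sum fun k _ => ?_
          split <;> simp
      _ = ENNReal.ofReal (∑ k ∈ range (N + 1), pb N k x) :=
          (ENNReal.ofReal_sum_of_nonneg fun k _ => pb_nonneg hx).symm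
      _ = 1 := by rw [pb_sum]; simp
  · rcases eq_or_ne t x with rfl | htx
    · have : ENNReal.ofReal ((t - t) ^ 2) = 0 := by simp
      rw [this, ENNReal.div_zero (by positivity)]
      exact le_top
    · have he : 0 < (x - t) ^ 2 := by
        have : x - t ≠ 0 := sub_ne_zero.2 (Ne.symm htx)
        positivity
      have hterm : ∀ k ∈ range (N + 1),
          ENNReal.ofReal (pb N k x) *
            (if t ∈ Icc (min x ((k:ℝ)/N)) (max x ((k:ℝ)/N)) then 1 else 0)
          ≤ ENNReal.ofReal ((x - (k:ℝ)/N) ^ 2 * pb N k x) / ENNReal.ofReal ((x - t) ^ 2) := by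
        intro k _
        split
        · rename_i ht
          have hsq : (x - t) ^ 2 ≤ (x - (k:ℝ)/N) ^ 2 := by
            rcases le_total x ((k:ℝ)/N) with h | h
            · rw [min_eq_left h, max_eq_right h] at ht
              have := ht.1; have := ht.2
              nlinarith
            · rw [min_eq_right h, max_eq_left h] at ht
              have := ht.1; have := ht.2
              nlinarith
          rw [mul_one, ENNReal.le_div_iff_mul_le
            (Or.inl (by simp [ENNReal.ofReal_pos, he, sub_ne_zero.2 (Ne.symm htx)])) (Or.inl ENNReal.ofReal_ne_top),
            ← ENNReal.ofReal_mul (pb_nonneg hx)]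
          exact ENNReal.ofReal_le_ofReal
            (by nlinarith [pb_nonneg (N := N) (k := k) hx])
        · simp
      calc _ ≤ ∑ k ∈ range (N + 1),
            ENNReal.ofReal ((x - (k:ℝ)/N) ^ 2 * pb N k x) / ENNReal.ofReal ((x - t) ^ 2) :=
            Finset.sum_le_sum hterm
        _ = (∑ k ∈ range (N + 1), ENNReal.ofReal ((x - (k:ℝ)/N) ^ 2 * pb N k x))
              / ENNReal.ofReal ((x - t) ^ 2) := by
            simp only [div_eq_mul_inv, ← Finset.sum_mul]
        _ = ENNReal.ofReal (x * (1 - x) / N) / ENNReal.ofReal ((x - t) ^ 2) := by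
            rw [← ENNReal.ofReal_sum_of_nonneg, pb_var hN]
            intro k _
            exact mul_nonneg (sq_nonneg _) (pb_nonneg hx)
        _ ≤ _ := by
            apply ENNReal.div_le_div_right
            apply ENNReal.ofReal_le_ofReal
            rw [div_le_div_iff₀ (by exact_mod_cast hN) (by positivity)]
            nlinarith [sq_nonneg (x - 1/2), (Nat.cast_pos (α := ℝ)).2 hN]

/-- Improper integral helper. -/
lemma helper0 {δ : ℝ} (hδ : 0 < δ) :
    ∫⁻ y in Ioi δ, ENNReal.ofReal (δ ^ 2 * (y ^ 2)⁻¹) = ENNReal.ofReal δ := by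
  have hint : IntegrableOn (fun y : ℝ => δ ^ 2 * (y ^ 2)⁻¹) (Ioi δ) := by
    have base : IntegrableOn (fun y : ℝ => δ ^ 2 * y ^ (-2:ℝ)) (Ioi δ) :=
      (integrableOn_Ioi_rpow_of_lt (by norm_num : (-2:ℝ) < -1) hδ).const_mul (δ ^ 2)
    refine base.congr_fun (fun y hy => ?_) measurableSet_Ioi
    have hy0 : (0:ℝ) < y := hδ.trans hy
    beta_reduce
    rw [Real.rpow_neg hy0.le, show (2:ℝ) = ((2:ℕ):ℝ) by norm_num, Real.rpow_natCast]
  have hval : ∫ y in Ioi δ, δ ^ 2 * (y ^ 2)⁻¹ = δ := by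
    rw [MeasureTheory.integral_congr_ae (g := fun y : ℝ => δ ^ 2 * y ^ (-2:ℝ)) ?_]
    · rw [MeasureTheory.integral_const_mul, integral_Ioi_rpow_of_lt (by norm_num) hδ]
      rw [show (-2:ℝ) + 1 = -1 by norm_num, Real.rpow_neg_one]
      field_simp
    · filter_upwards [ae_restrict_mem measurableSet_Ioi] with y hy
      have hy0 : (0:ℝ) < y := hδ.trans hy
      rw [Real.rpow_neg hy0.le, show (2:ℝ) = ((2:ℕ):ℝ) by norm_num, Real.rpow_natCast]
  rw [← MeasureTheory.ofReal_integral_eq_lintegral_ofReal hint, hval]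
  filter_upwards [ae_restrict_mem measurableSet_Ioi] with y hy
  have hy0 : (0:ℝ) < y := hδ.trans hy
  positivity



lemma helper_right {δ t : ℝ} (hδ : 0 < δ) :
    ∫⁻ x in Ioi (t + δ), ENNReal.ofReal (δ ^ 2 * ((x - t) ^ 2)⁻¹) = ENNReal.ofReal δ := by
  have hmp : MeasurePreserving (fun x : ℝ => x - t) volume volume :=
    measurePreserving_sub_right volume t
  have hemb : MeasurableEmbedding (fun x : ℝ => x - t) :=
    (MeasurableEquiv.subRight t).measurableEmbedding
  have hpre : (fun x : ℝ => x - t) ⁻¹' (Ioi δ) = Ioi (t + δ) := by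
    ext x; simp [Set.mem_Ioi, lt_sub_iff_add_lt, add_comm]
  calc ∫⁻ x in Ioi (t + δ), ENNReal.ofReal (δ ^ 2 * ((x - t) ^ 2)⁻¹)
      = ∫⁻ x in (fun x : ℝ => x - t) ⁻¹' (Ioi δ),
          (fun y => ENNReal.ofReal (δ ^ 2 * (y ^ 2)⁻¹)) ((fun x : ℝ => x - t) x) := by
        rw [hpre]
    _ = ∫⁻ y in Ioi δ, ENNReal.ofReal (δ ^ 2 * (y ^ 2)⁻¹) := by
        simpa using hmp.setLIntegral_comp_preimage_emb hemb
          (fun y => ENNReal.ofReal (δ ^ 2 * (y ^ 2)⁻¹)) (Ioi δ)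
    _ = ENNReal.ofReal δ := helper0 hδ

lemma helper_left {δ t : ℝ} (hδ : 0 < δ) :
    ∫⁻ x in Iio (t - δ), ENNReal.ofReal (δ ^ 2 * ((x - t) ^ 2)⁻¹) = ENNReal.ofReal δ := by
  have hmp : MeasurePreserving (fun x : ℝ => t - x) volume volume :=
    Measure.measurePreserving_sub_left volume t
  have hemb : MeasurableEmbedding (fun x : ℝ => t - x) :=
    (MeasurableEquiv.subLeft t).measurableEmbedding
  have hpre : (fun x : ℝ => t - x) ⁻¹' (Ioi δ) = Iio (t - δ) := by
    ext x
    simp only [Set.mem_preimage, Set.mem_Ioi, Set.mem_Iio]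
    constructor <;> intro h <;> linarith
  have hsymm : ∀ x : ℝ, ((x - t) ^ 2 : ℝ) = (t - x) ^ 2 := fun x => by ring
  calc ∫⁻ x in Iio (t - δ), ENNReal.ofReal (δ ^ 2 * ((x - t) ^ 2)⁻¹)
      = ∫⁻ x in (fun x : ℝ => t - x) ⁻¹' (Ioi δ),
          (fun y => ENNReal.ofReal (δ ^ 2 * (y ^ 2)⁻¹)) ((fun x : ℝ => t - x) x) := by
        rw [hpre]
        exact lintegral_congr fun x => by rw [hsymm x]
    _ = ∫⁻ y in Ioi δ, ENNReal.ofReal (δ ^ 2 * (y ^ 2)⁻¹) := by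
        simpa using hmp.setLIntegral_comp_preimage_emb hemb
          (fun y => ENNReal.ofReal (δ ^ 2 * (y ^ 2)⁻¹)) (Ioi δ)
    _ = ENNReal.ofReal δ := helper0 hδ

/-- Claim B -/
lemma claimB {δ : ℝ} (hδ : 0 < δ) (t : ℝ) :
    ∫⁻ x in Ioc (0:ℝ) 1, min 1 (ENNReal.ofReal (δ ^ 2) / ENNReal.ofReal ((x - t) ^ 2))
      ≤ ENNReal.ofReal (4 * δ) := by
  set f : ℝ → ℝ≥0∞ := fun x => min 1 (ENNReal.ofReal (δ ^ 2) / ENNReal.ofReal ((x - t) ^ 2))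
    with hf
  have hsub : Ioc (0:ℝ) 1 ⊆ (Icc (t - δ) (t + δ) ∪ Iio (t - δ)) ∪ Ioi (t + δ) := by
    intro x _
    rcases lt_trichotomy x (t - δ) with h | h | h
    · exact Or.inl (Or.inr h)
    · exact Or.inl (Or.inl ⟨h.ge, by linarith⟩)
    · rcases le_or_gt x (t + δ) with h2 | h2
      · exact Or.inl (Or.inl ⟨h.le, h2⟩)
      · exact Or.inr h2
  have hmono : ∫⁻ x in Ioc (0:ℝ) 1, f x
      ≤ ∫⁻ x in (Icc (t - δ) (t + δ) ∪ Iio (t - δ)) ∪ Ioi (t + δ), f x :=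
    lintegral_mono_set hsub
  have hfar : ∀ x : ℝ, x ∉ Icc (t - δ) (t + δ) →
      f x ≤ ENNReal.ofReal (δ ^ 2 * ((x - t) ^ 2)⁻¹) := by
    intro x hx
    have hne : (x - t) ^ 2 ≠ 0 := by
      intro h0
      have : x = t := by nlinarith [sq_nonneg (x - t)]
      exact hx ⟨by linarith, by linarith⟩
    have hpos : 0 < (x - t) ^ 2 := lt_of_le_of_ne (sq_nonneg _) (Ne.symm hne)
    calc f x ≤ ENNReal.ofReal (δ ^ 2) / ENNReal.ofReal ((x - t) ^ 2) := min_le_right _ _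
      _ = ENNReal.ofReal (δ ^ 2 * ((x - t) ^ 2)⁻¹) := by
          rw [ENNReal.ofReal_mul (by positivity : (0:ℝ) ≤ δ ^ 2),
            ENNReal.ofReal_inv_of_pos hpos, div_eq_mul_inv]
  calc ∫⁻ x in Ioc (0:ℝ) 1, f x
      ≤ ∫⁻ x in (Icc (t - δ) (t + δ) ∪ Iio (t - δ)) ∪ Ioi (t + δ), f x := hmono
    _ ≤ ((∫⁻ x in Icc (t - δ) (t + δ), f x) + (∫⁻ x in Iio (t - δ), f x))
          + (∫⁻ x in Ioi (t + δ), f x) :=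
        le_trans (lintegral_union_le _ _ _) (add_le_add (lintegral_union_le _ _ _) le_rfl)
    _ ≤ (ENNReal.ofReal (2 * δ) + ENNReal.ofReal δ) + ENNReal.ofReal δ := by
        have b1 : (∫⁻ x in Icc (t - δ) (t + δ), f x) ≤ ENNReal.ofReal (2 * δ) := by
          calc (∫⁻ x in Icc (t - δ) (t + δ), f x) ≤ ∫⁻ _ in Icc (t - δ) (t + δ), 1 :=
              lintegral_mono fun x => min_le_left _ _
            _ = volume (Icc (t - δ) (t + δ)) := by simp
            _ = ENNReal.ofReal (2 * δ) := by rw [Real.volume_Icc]; ring_nf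
        have b2 : (∫⁻ x in Iio (t - δ), f x) ≤ ENNReal.ofReal δ := by
          calc (∫⁻ x in Iio (t - δ), f x)
              ≤ ∫⁻ x in Iio (t - δ), ENNReal.ofReal (δ ^ 2 * ((x - t) ^ 2)⁻¹) := by
                refine setLIntegral_mono' measurableSet_Iio fun x hx =>
                  hfar x fun hmem => absurd hmem.1 (not_le.2 hx)
            _ = ENNReal.ofReal δ := helper_left hδ
        have b3 : (∫⁻ x in Ioi (t + δ), f x) ≤ ENNReal.ofReal δ := by
          calc (∫⁻ x in Ioi (t + δ), f x)
              ≤ ∫⁻ x in Ioi (t + δ), ENNReal.ofReal (δ ^ 2 * ((x - t) ^ 2)⁻¹) := by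
                refine setLIntegral_mono' measurableSet_Ioi fun x hx =>
                  hfar x fun hmem => absurd hmem.2 (not_le.2 hx)
            _ = ENNReal.ofReal δ := helper_right hδ
        exact add_le_add (add_le_add b1 b2) b3
    _ = ENNReal.ofReal (4 * δ) := by
        rw [← ENNReal.ofReal_add (by positivity) hδ.le, ← ENNReal.ofReal_add (by positivity) hδ.le]
        congr 1
        ring





lemma pb_measurable (N k : ℕ) : Measurable (pb N k) := by
  unfold pb
  exact ((measurable_const.mul (measurable_id.pow_const k)).mul
    ((measurable_const.sub measurable_id).pow_const (N - k)))

theorem main :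
    ∃ C : ℝ, 0 < C ∧
      ∀ u : ℝ → ℝ, eVariationOn u (Set.Icc (0 : ℝ) 1) ≠ ⊤ →
        ∀ N : ℕ, 0 < N →
          (∫ x in (0 : ℝ)..1, |(∑ k ∈ Finset.range (N + 1),
              u ((k : ℝ) / (N : ℝ)) * (N.choose k : ℝ) * x ^ k * (1 - x) ^ (N - k)) - u x|)
            ≤ C * (eVariationOn u (Set.Icc (0 : ℝ) 1)).toReal * (N : ℝ) ^ (-(1 / 2 : ℝ)) := by
  refine ⟨2, by norm_num, fun u hu N hN => ?_⟩
  set V : ℝ := (eVariationOn u (Set.Icc (0 : ℝ) 1)).toReal with hV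
  have hV0 : 0 ≤ V := ENNReal.toReal_nonneg
  have hNR : (0:ℝ) < N := Nat.cast_pos.2 hN
  set δ : ℝ := (2 * Real.sqrt N)⁻¹ with hδdef
  have hsqrtN : (0:ℝ) < Real.sqrt N := Real.sqrt_pos.2 hNR
  have hδ : 0 < δ := by positivity
  have hδ2 : δ ^ 2 = 1 / (4 * N) := by
    rw [hδdef, inv_pow, mul_pow, Real.sq_sqrt hNR.le]
    norm_num
  set B : ℝ → ℝ := fun x => ∑ k ∈ Finset.range (N + 1),
      u ((k : ℝ) / (N : ℝ)) * (N.choose k : ℝ) * x ^ k * (1 - x) ^ (N - k) with hB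
  -- measurability of things
  have hgmeas : Measurable (gi u) := gi_mono.measurable
  set T : ℕ → Set (ℝ × ℝ) := fun k => {q : ℝ × ℝ | (0 ≤ q.2 ∧ q.2 < V) ∧
      gi u q.2 ∈ Icc (min q.1 ((k:ℝ)/N)) (max q.1 ((k:ℝ)/N))} with hT
  have hTmeas : ∀ k, MeasurableSet (T k) := by
    intro k
    have h1 : MeasurableSet {q : ℝ × ℝ | 0 ≤ q.2} :=
      measurableSet_le measurable_const measurable_snd
    have h2 : MeasurableSet {q : ℝ × ℝ | q.2 < V} :=
      measurableSet_lt measurable_snd measurable_const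
    have h3 : MeasurableSet {q : ℝ × ℝ | min q.1 ((k:ℝ)/N) ≤ gi u q.2} :=
      measurableSet_le (measurable_fst.min measurable_const) (hgmeas.comp measurable_snd)
    have h4 : MeasurableSet {q : ℝ × ℝ | gi u q.2 ≤ max q.1 ((k:ℝ)/N)} :=
      measurableSet_le (hgmeas.comp measurable_snd) (measurable_fst.max measurable_const)
    have : T k = ({q : ℝ × ℝ | 0 ≤ q.2} ∩ {q : ℝ × ℝ | q.2 < V}) ∩
        ({q : ℝ × ℝ | min q.1 ((k:ℝ)/N) ≤ gi u q.2} ∩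
          {q : ℝ × ℝ | gi u q.2 ≤ max q.1 ((k:ℝ)/N)}) := by
      ext q; simp [hT, Set.mem_Icc, and_assoc]
    rw [this]
    exact ((h1.inter h2).inter (h3.inter h4))
  set F : ℕ → ℝ × ℝ → ℝ≥0∞ := fun k q =>
    ENNReal.ofReal (pb N k q.1) * (T k).indicator 1 q with hF
  have hFmeas : ∀ k, Measurable (F k) := fun k =>
    ((pb_measurable N k).comp measurable_fst).ennreal_ofReal.mul
      (measurable_const.indicator (hTmeas k))
  -- the chain
  have chain : ∫⁻ x in Ioc (0:ℝ) 1, ENNReal.ofReal |B x - u x|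
      ≤ ENNReal.ofReal (4 * δ) * ENNReal.ofReal V := by
    have c1 : ∫⁻ x in Ioc (0:ℝ) 1, ENNReal.ofReal |B x - u x|
        ≤ ∫⁻ x in Ioc (0:ℝ) 1, ∑ k ∈ range (N + 1), (∫⁻ s, F k (x, s)) := by
      refine setLIntegral_mono' measurableSet_Ioc fun x hx => ?_
      have hx' : x ∈ Icc (0:ℝ) 1 := ⟨hx.1.le, hx.2⟩
      calc ENNReal.ofReal |B x - u x|
          ≤ ENNReal.ofReal (∑ k ∈ range (N + 1), pb N k x * |u ((k : ℝ) / N) - u x|) :=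
            ENNReal.ofReal_le_ofReal (step1 u hx')
        _ = ∑ k ∈ range (N + 1), ENNReal.ofReal (pb N k x * |u ((k : ℝ) / N) - u x|) :=
            ENNReal.ofReal_sum_of_nonneg fun k _ =>
              mul_nonneg (pb_nonneg hx') (abs_nonneg _)
        _ = ∑ k ∈ range (N + 1),
              ENNReal.ofReal (pb N k x) * ENNReal.ofReal |u ((k : ℝ) / N) - u x| :=
            Finset.sum_congr rfl fun k _ => ENNReal.ofReal_mul (pb_nonneg hx')
        _ ≤ ∑ k ∈ range (N + 1), (∫⁻ s, F k (x, s)) := by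
            refine Finset.sum_le_sum fun k hk => ?_
            have hk' : (k:ℝ)/N ∈ Icc (0:ℝ) 1 := by
              have hkN : (k:ℝ) ≤ N := by
                exact_mod_cast Nat.lt_succ_iff.1 (Finset.mem_range.1 hk)
              exact ⟨by positivity, by rw [div_le_one hNR]; exact hkN⟩
            have hslice : {s : ℝ | (x, s) ∈ T k} =
                {s : ℝ | (0 ≤ s ∧ s < V) ∧
                  gi u s ∈ Icc (min x ((k:ℝ)/N)) (max x ((k:ℝ)/N))} := rfl
            have hfub : (∫⁻ s, F k (x, s)) =
                ENNReal.ofReal (pb N k x) * volume {s : ℝ | (x, s) ∈ T k} := by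
              rw [hF]
              simp only
              rw [lintegral_const_mul' _ _ ENNReal.ofReal_ne_top]
              congr 1
              have : (fun s : ℝ => (T k).indicator (1 : ℝ × ℝ → ℝ≥0∞) (x, s))
                  = fun s : ℝ => ({s : ℝ | (x, s) ∈ T k}).indicator (1 : ℝ → ℝ≥0∞) s := by
                funext s
                by_cases h : (x, s) ∈ T k <;>
                  simp [Set.indicator_apply, h]
              rw [this]
              exact lintegral_indicator_one (measurable_prodMk_left (hTmeas k))
            rw [hfub, hslice]
            exact mul_le_mul_right (key2 hu hx' hk') _
    have c2 : ∫⁻ x in Ioc (0:ℝ) 1, ∑ k ∈ range (N + 1), (∫⁻ s, F k (x, s))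
        = ∑ k ∈ range (N + 1), ∫⁻ s, (∫⁻ x in Ioc (0:ℝ) 1, F k (x, s)) := by
      rw [lintegral_finset_sum' _ fun k _ =>
        ((hFmeas k).lintegral_prod_right').aemeasurable]
      exact Finset.sum_congr rfl fun k _ =>
        lintegral_lintegral_swap ((hFmeas k).aemeasurable)
    have c3 : ∑ k ∈ range (N + 1), ∫⁻ s, (∫⁻ x in Ioc (0:ℝ) 1, F k (x, s))
        = ∫⁻ s, ∑ k ∈ range (N + 1), (∫⁻ x in Ioc (0:ℝ) 1, F k (x, s)) :=
      (lintegral_finset_sum' _ fun k _ =>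
        ((hFmeas k).lintegral_prod_left').aemeasurable).symm
    have c4 : ∀ s : ℝ, (∑ k ∈ range (N + 1), (∫⁻ x in Ioc (0:ℝ) 1, F k (x, s)))
        ≤ (Ico (0:ℝ) V).indicator (fun _ => ENNReal.ofReal (4 * δ)) s := by
      intro s
      by_cases hs : 0 ≤ s ∧ s < V
      · have hind : (Ico (0:ℝ) V).indicator (fun _ => ENNReal.ofReal (4 * δ)) s
            = ENNReal.ofReal (4 * δ) :=
          Set.indicator_of_mem (show s ∈ Ico (0:ℝ) V from hs) _
        rw [hind]
        set t : ℝ := gi u s with ht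
        have hsum : (∑ k ∈ range (N + 1), (∫⁻ x in Ioc (0:ℝ) 1, F k (x, s)))
            = ∫⁻ x in Ioc (0:ℝ) 1, ∑ k ∈ range (N + 1), F k (x, s) :=
          (lintegral_finset_sum' _ fun k _ =>
            ((hFmeas k).comp (measurable_prodMk_right)).aemeasurable).symm
        rw [hsum]
        calc ∫⁻ x in Ioc (0:ℝ) 1, ∑ k ∈ range (N + 1), F k (x, s)
            ≤ ∫⁻ x in Ioc (0:ℝ) 1,
                min 1 (ENNReal.ofReal (δ ^ 2) / ENNReal.ofReal ((x - t) ^ 2)) := by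
              refine setLIntegral_mono' measurableSet_Ioc fun x hx => ?_
              have hx' : x ∈ Icc (0:ℝ) 1 := ⟨hx.1.le, hx.2⟩
              have hbound : ∀ k ∈ range (N + 1), F k (x, s) ≤
                  ENNReal.ofReal (pb N k x) *
                    (if t ∈ Icc (min x ((k:ℝ)/N)) (max x ((k:ℝ)/N)) then 1 else 0) := by
                intro k _
                rw [hF]
                simp only
                apply mul_le_mul_right
                by_cases h : (x, s) ∈ T k
                · rw [Set.indicator_of_mem h]
                  have : t ∈ Icc (min x ((k:ℝ)/N)) (max x ((k:ℝ)/N)) := h.2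
                  rw [if_pos this]
                  exact le_refl _
                · rw [Set.indicator_of_notMem h]
                  exact zero_le
              calc ∑ k ∈ range (N + 1), F k (x, s)
                  ≤ ∑ k ∈ range (N + 1), ENNReal.ofReal (pb N k x) *
                      (if t ∈ Icc (min x ((k:ℝ)/N)) (max x ((k:ℝ)/N)) then 1 else 0) :=
                    Finset.sum_le_sum hbound
                _ ≤ min 1 (ENNReal.ofReal (1 / (4 * N)) / ENNReal.ofReal ((x - t) ^ 2)) :=
                    claimA hN hx' t
                _ = min 1 (ENNReal.ofReal (δ ^ 2) / ENNReal.ofReal ((x - t) ^ 2)) := by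
                    rw [hδ2]
          _ ≤ ENNReal.ofReal (4 * δ) := claimB hδ t
      · have hzero : ∀ k ∈ range (N + 1), (∫⁻ x in Ioc (0:ℝ) 1, F k (x, s)) = 0 := by
          intro k _
          have : ∀ x : ℝ, F k (x, s) = 0 := by
            intro x
            rw [hF]
            simp only
            have : (x, s) ∉ T k := fun h => hs ⟨h.1.1, h.1.2⟩
            rw [Set.indicator_of_notMem this, mul_zero]
          simp only [this, lintegral_zero]
        rw [Finset.sum_eq_zero hzero]
        exact zero_le
    calc ∫⁻ x in Ioc (0:ℝ) 1, ENNReal.ofReal |B x - u x|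
        ≤ ∫⁻ s, ∑ k ∈ range (N + 1), (∫⁻ x in Ioc (0:ℝ) 1, F k (x, s)) := by
          rw [← c3, ← c2]; exact c1
      _ ≤ ∫⁻ s, (Ico (0:ℝ) V).indicator (fun _ => ENNReal.ofReal (4 * δ)) s :=
          lintegral_mono c4
      _ = ENNReal.ofReal (4 * δ) * volume (Ico (0:ℝ) V) := by
          rw [lintegral_indicator_const measurableSet_Ico]
      _ = ENNReal.ofReal (4 * δ) * ENNReal.ofReal V := by
          rw [Real.volume_Ico, sub_zero]
  -- convert interval integral to lintegral
  have hmB : Measurable B := by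
    rw [hB]
    refine Finset.measurable_sum _ fun k _ => ?_
    exact ((measurable_const.mul (measurable_id.pow_const k)).mul
      ((measurable_const.sub measurable_id).pow_const (N - k)))
  -- a measurable a.e. version of u on (0,1]
  set m : ℝ → ℝ := fun x => vf u x - u (clamp x) with hm
  have hvfclamp : ∀ x, vf u (clamp x) = vf u x := by
    intro x
    unfold vf
    rw [clamp_of_mem (clamp_mem x)]
  have hm_mono : Monotone m := by
    intro a b hab
    have h := abs_u_le_vf hu (clamp_mem a) (clamp_mem b) (clamp_mono hab)
    rw [hvfclamp a, hvfclamp b] at h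
    have h2 : u (clamp b) - u (clamp a) ≤ vf u b - vf u a :=
      (le_abs_self _).trans h
    simp only [hm]
    linarith
  have hmeas_u' : Measurable (fun x => vf u x - m x) :=
    (vf_mono hu).measurable.sub hm_mono.measurable
  have huae : (fun x => vf u x - m x) =ᵐ[volume.restrict (Ioc (0:ℝ) 1)] u := by
    refine (ae_restrict_iff' measurableSet_Ioc).2 (ae_of_all _ fun x hx => ?_)
    simp only [hm]
    rw [clamp_of_mem ⟨hx.1.le, hx.2⟩]
    ring
  have hsm : AEStronglyMeasurable (fun x => |B x - u x|) (volume.restrict (Ioc (0:ℝ) 1)) := by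
    refine ((hmB.sub hmeas_u').abs.aestronglyMeasurable).congr ?_
    filter_upwards [huae] with x hx
    simp only [Pi.sub_apply, hx]
  have hconv : (∫ x in (0:ℝ)..1, |B x - u x|)
      = (∫⁻ x in Ioc (0:ℝ) 1, ENNReal.ofReal |B x - u x|).toReal := by
    rw [intervalIntegral.integral_of_le zero_le_one]
    exact integral_eq_lintegral_of_nonneg_ae (ae_of_all _ fun x => abs_nonneg _) hsm
  -- final arithmetic
  have hrpow : (N : ℝ) ^ (-(1 / 2 : ℝ)) = (Real.sqrt N)⁻¹ := by
    rw [Real.sqrt_eq_rpow, ← Real.rpow_neg (Nat.cast_nonneg N)]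
  have hRHS : (0:ℝ) ≤ 2 * V * (N : ℝ) ^ (-(1 / 2 : ℝ)) := by
    have : (0:ℝ) < (N : ℝ) ^ (-(1 / 2 : ℝ)) := Real.rpow_pos_of_pos hNR _
    positivity
  rw [show (fun x : ℝ => ∑ k ∈ Finset.range (N + 1),
      u ((k : ℝ) / (N : ℝ)) * (N.choose k : ℝ) * x ^ k * (1 - x) ^ (N - k)) = B from rfl] at *
  calc (∫ x in (0:ℝ)..1, |B x - u x|)
      = (∫⁻ x in Ioc (0:ℝ) 1, ENNReal.ofReal |B x - u x|).toReal := hconv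
    _ ≤ 2 * V * (N : ℝ) ^ (-(1 / 2 : ℝ)) := by
        refine ENNReal.toReal_le_of_le_ofReal hRHS ?_
        refine chain.trans ?_
        rw [← ENNReal.ofReal_mul (by positivity)]
        apply ENNReal.ofReal_le_ofReal
        rw [hrpow, hδdef]
        rw [mul_inv]
        exact le_of_eq (by ring)


end BernsteinBV

end BernsteinBVProof

/-- There is an absolute constant `C` such that for every function `u` of bounded
(pointwise) variation on `[0,1]` and every `N ≥ 1`, the Bernstein polynomial satisfies
`∫_0^1 |B_N(u) − u| ≤ C·V(u)·N^{−1/2}`. -/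
theorem bernstein_L1_error_BV :
    ∃ C : ℝ, 0 < C ∧
      ∀ u : ℝ → ℝ, eVariationOn u (Set.Icc (0 : ℝ) 1) ≠ ⊤ →
        ∀ N : ℕ, 0 < N →
          ∫ x in (0 : ℝ)..1, |bernstein' N u x - u x|
            ≤ C * (eVariationOn u (Set.Icc (0 : ℝ) 1)).toReal * (N : ℝ) ^ (-(1 / 2 : ℝ)) := by
  obtain ⟨C, hC, h⟩ := BernsteinBV.main
  exact ⟨C, hC, fun u hu N hN => by simpa [bernstein'] using h u hu N hN⟩
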